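/- Let S be a finite semigroup with blowup operator B and multipliers m_s, and define B̂ : S^* → S^* recursively by B̂(ε) = ε and B̂(b⃗·s) = B̂(b⃗·Δ_{m_s}) · B(s), where Δ_u multiplies each coordinate on the right by u. Then for any L-chain (x_n,…,x_1), writing B̂(x_n,…,x_1) = (y_n,…,y_1), we have x_i ⊆ y_i for all i. -/

import Mathlib

open Pointwise

/-- Multiplication of an element of a semigroup `M` by an element of `M¹ = M` with an
adjoined identity (modelled as `Option M`, `none` being the identity `I`). -/
def hmul {M : Type*} [Mul M] (h : M) : Option M → M := fun s => s.elim h (fun u => h * u)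

/-- Multiplication in `M¹` (modelled as `Option M`). -/
def omul {M : Type*} [Mul M] : Option M → Option M → Option M
  | none, t => t
  | some a, none => some a
  | some a, some b => some (a * b)

/-- `mpow a n = aⁿ` for `n ≥ 1` (with the junk value `mpow a 0 = a`). -/
def mpow {M : Type*} [Mul M] (a : M) : ℕ → M
  | 0 => a
  | 1 => a
  | n+2 => mpow a (n+1) * a

/-- Green's preorder `a ≤_L b` iff `a ∈ M¹ b`. -/
def leL {M : Type*} [Mul M] (a b : M) : Prop := a = b ∨ ∃ u, a = u * b
/-- Green's preorder `a ≤_R b` iff `a ∈ b M¹`. -/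
def leR {M : Type*} [Mul M] (a b : M) : Prop := a = b ∨ ∃ u, a = b * u
/-- Green's `L`-equivalence. -/
def eqL {M : Type*} [Mul M] (a b : M) : Prop := leL a b ∧ leL b a
/-- Green's `R`-equivalence. -/
def eqR {M : Type*} [Mul M] (a b : M) : Prop := leR a b ∧ leR b a
/-- Green's `H`-equivalence. -/
def eqH {M : Type*} [Mul M] (a b : M) : Prop := eqL a b ∧ eqR a b
/-- `a <_H b` : `a ≤_L b`, `a ≤_R b`, but `a` is not `H`-equivalent to `b`. -/
def ltH {M : Type*} [Mul M] (a b : M) : Prop := leL a b ∧ leR a b ∧ ¬ eqH a b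

/-- The `H`-class of `a`, as a type. -/
def HclsT {M : Type*} [Mul M] (a : M) := {x : M // eqH x a}

/-- The (right) Schützenberger group of the `H`-class of `a`: the set of transformations of the
`H`-class of `a` induced by right multiplication by elements of the right stabilizer in `M¹`. -/
def gammaR {M : Type*} [Mul M] (a : M) : Set (HclsT a → HclsT a) :=
  {f | ∃ s : Option M, (∀ h : HclsT a, eqH (hmul h.1 s) a) ∧
        ∀ h : HclsT a, (f h).1 = hmul h.1 s}

/-- An element is `π'`-free if the Schützenberger group of its (`J`-class, equivalently its)
`H`-class is a `π`-group: every prime dividing its order lies in `π`. -/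
def piFree {M : Type*} [Mul M] (π : Set ℕ) (a : M) : Prop :=
  ∀ p : ℕ, p.Prime → p ∣ (gammaR a).ncard → p ∈ π

/-- A preblowup operator on a finite semigroup `S` realized as a subsemigroup of `P(T)` via an
injective semigroup embedding `ι : S → Set T`. -/
def IsPreblowupE (π : Set ℕ) {T : Type*} {S : Type*} [Semigroup T] [Semigroup S]
    (ι : S → Set T) (B : S → S) (m : S → Option S) : Prop :=
  (∀ s, piFree π s → B s = s) ∧
  (∀ s, ¬ piFree π s → ltH (B s) s) ∧
  (∀ s, ι s ⊆ ι (B s)) ∧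
  (∀ s, B s = hmul s (m s)) ∧
  (∀ s s', eqL s s' → m s = m s')

/-- An `L`-chain `(s_n, …, s_1)` (with `s_{i+1} ≤_L s_i`), encoded as the list
`[s_1, s_2, …, s_n]` whose head is the first (rightmost) letter. -/
def isChain {S : Type*} [Mul S] (l : List S) : Prop := List.Chain' (fun a b => leL b a) l

/-- A flag: a strict `L`-chain. -/
def isFlag {S : Type*} [Mul S] (l : List S) : Prop :=
  List.Chain' (fun a b => leL b a ∧ ¬ leL a b) l

/-- Elementary reduction `(…, s', s, …) → (…, s', …)` when `s' L s`: delete the earlier-read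
entry `s` of two adjacent `L`-equivalent entries, keeping `s'`. -/
def rstep {S : Type*} [Mul S] (l l' : List S) : Prop :=
  ∃ (l₁ : List S) (s s' : S) (l₂ : List S),
    eqL s' s ∧ l = l₁ ++ s :: s' :: l₂ ∧ l' = l₁ ++ s' :: l₂

/-- Henckell's formula: `B̂(ε) = ε`, `B̂(b⃗·s) = B̂(b⃗Δ_{m_s}) · B(s)`, where strings
`(x_n, …, x_1)` are encoded as lists `[x_1, …, x_n]` (head = rightmost letter) and
`Δ_u` multiplies every coordinate on the right by `u ∈ S¹`. -/
def Bhat {S : Type*} [Semigroup S] (B : S → S) (m : S → Option S) : List S → List S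
  | [] => []
  | s :: b => B s :: Bhat B m (b.map (fun x => hmul x (m s)))
termination_by l => l.length
decreasing_by simp

/-- `B̂` blows up `L`-chains: if `B` is a blowup operator (idempotent preblowup operator) on
the finite semigroup `S ⊆ P(T)` with multipliers `m`, and `(x_n, …, x_1)` is an `L`-chain with
`B̂(x_n, …, x_1) = (y_n, …, y_1)`, then `x_i ⊆ y_i` for all `i`. -/
theorem stmt_14 (π : Set ℕ) {T S : Type*} [Semigroup T] [Fintype T] [Semigroup S] [Fintype S]
    (ι : S → Set T) (hιinj : Function.Injective ι) (hιmul : ∀ a b, ι (a * b) = ι a * ι b)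
    (B : S → S) (m : S → Option S) (hpre : IsPreblowupE π ι B m)
    (hidem : ∀ s, B (B s) = B s) (l : List S) (hl : isChain l) :
    List.Forall₂ (fun x y => ι x ⊆ ι y) l (Bhat B m l) := by
  have hBsub := hpre.2.2.1
  have hBm := hpre.2.2.2.1
  -- leL is transitive
  have ltrans : ∀ a b c : S, leL a b → leL b c → leL a c := by
    rintro a b c (rfl | ⟨u, rfl⟩) (rfl | ⟨v, rfl⟩)
    · exact Or.inl rfl
    · exact Or.inr ⟨v, rfl⟩
    · exact Or.inr ⟨u, rfl⟩
    · exact Or.inr ⟨u * v, (mul_assoc u v c).symm⟩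
  -- leL preserved by right multiplication by Option
  have lmul : ∀ (a b : S) (u : Option S), leL a b → leL (hmul a u) (hmul b u) := by
    rintro a b (_ | u) (rfl | ⟨v, rfl⟩)
    · exact Or.inl rfl
    · exact Or.inr ⟨v, rfl⟩
    · exact Or.inl rfl
    · exact Or.inr ⟨v, by simp [hmul, mul_assoc]⟩
  -- key containment : if x ≤_L s then ι x ⊆ ι (x · m s)
  have hkey : ∀ (s x : S), leL x s → ι x ⊆ ι (hmul x (m s)) := by
    rintro s x (rfl | ⟨v, rfl⟩)
    · rw [← hBm x]; exact hBsub x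
    · intro t ht
      rw [hιmul] at ht
      cases hm : m s with
      | none => simp only [hmul, Option.elim]; rw [hιmul]; exact ht
      | some u =>
        have hsub : ι s ⊆ ι (s * u) := by
          have := hBsub s; rwa [hBm s, hm, hmul] at this
        have h2 : t ∈ ι v * ι (s * u) := Set.mul_subset_mul_left hsub ht
        simpa [hmul, hιmul, mul_assoc] using h2
  -- main induction on length
  suffices h : ∀ n (l : List S), l.length ≤ n → isChain l →
      List.Forall₂ (fun x y => ι x ⊆ ι y) l (Bhat B m l) from
    h l.length l le_rfl hl
  intro n
  induction n with
  | zero =>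
    intro l hn _
    rw [List.length_eq_zero_iff.mp (Nat.le_zero.mp hn)]
    simp [Bhat]
  | succ n ih =>
    intro l hn hc
    match l with
    | [] => simp [Bhat]
    | s :: b =>
      rw [Bhat]
      constructor
      · exact hBsub s
      · -- all elements of b are ≤_L s
        haveI : IsTrans S (fun a b => leL b a) := ⟨fun a b c h1 h2 => ltrans c b a h2 h1⟩
        have hall : ∀ x ∈ b, leL x s :=
          (List.pairwise_cons.mp (List.isChain_iff_pairwise.mp hc)).1
        -- mapped list is a chain
        have hc2 : isChain (b.map (fun x => hmul x (m s))) := by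
          apply List.isChain_map_of_isChain _ _ (List.IsChain.tail hc)
          intro a b' h
          exact lmul b' a (m s) h
        have ih2 := ih (b.map (fun x => hmul x (m s))) (by simpa using Nat.lt_succ_iff.mp hn) hc2
        -- combine with the pointwise containment b → mapped b
        have hcomb : List.Forall₂ (fun x y => ι x ⊆ ι y) b (b.map (fun x => hmul x (m s))) := by
          rw [List.forall₂_map_right_iff]
          exact List.forall₂_same.mpr (fun x hx => hkey s x (hall x hx))
        have htrans : ∀ (l1 l2 l3 : List S), List.Forall₂ (fun x y => ι x ⊆ ι y) l1 l2 →
            List.Forall₂ (fun x y => ι x ⊆ ι y) l2 l3 →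
            List.Forall₂ (fun x y => ι x ⊆ ι y) l1 l3 := by
          intro l1 l2 l3 h1
          induction h1 generalizing l3 with
          | nil => intro h2; cases h2; exact List.Forall₂.nil
          | cons hab h ih3 =>
            intro h2
            cases h2 with
            | cons hbc h' => exact List.Forall₂.cons (hab.trans hbc) (ih3 _ h')
        exact htrans _ _ _ hcomb ih2
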